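/- arXiv:1808.06534 — 2 statements merged into one kernel-verified Lean document; each statement's English description precedes it below -/
import Mathlib

section
/- Let $r' \in (1,2)$, let $M > 2$, and let $I_1, \dots, I_m$ be pairwise disjoint intervals of equal length $\delta$ all contained in an interval $J$. Let $h \in L^{r'}(\mathbb{R})$ and let $\phi \in L^1(\mathbb{R})$ satisfy $|\phi(y)| \le \delta^{-1}(1 + |y|/\delta)^{-M}$. Then $$\sum_{i=1}^m |I_i| \, \|h * \phi\|_{L^\infty(I_i)}^{r'} \lesssim_M \int_{\mathbb{R}} |h(z)|^{r'} \Phi_J(z)\, dz,$$ where $\Phi_J(z) = (1 + \mathrm{dist}(z, J)/|J|)^{-N}$ for some $N > 0$ depending on $M$, provided $m\delta \le |J|$. -/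
open MeasureTheory

open Set Metric
open scoped ENNReal

lemma base_integrable {a : ℝ} (ha : 1 < a) :
    Integrable (fun v : ℝ => (1 + |v|) ^ (-a)) volume := by
  have h1 : ((Module.finrank ℝ ℝ : ℝ)) < a := by simpa using ha
  simpa [Real.norm_eq_abs] using integrable_one_add_norm (E := ℝ) (μ := volume) h1

lemma base_bound {a : ℝ} (ha : 1 < a) :
    ∫ v : ℝ, (1 + |v|) ^ (-a) ≤ 2 * (a / (a - 1)) := by
  have ha0 : (0:ℝ) < a - 1 := by linarith
  rw [integral_comp_abs (f := fun x => (1 + x) ^ (-a))]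
  have hIoi : IntegrableOn (fun x : ℝ => (1 + x) ^ (-a)) (Set.Ioi 0) volume := by
    refine ((base_integrable ha).integrableOn).congr_fun (fun x hx => ?_) measurableSet_Ioi
    show (1 + |x|) ^ (-a) = (1 + x) ^ (-a)
    rw [abs_of_nonneg (le_of_lt (show (0:ℝ) < x from hx))]
  have hsplit : Set.Ioc (0:ℝ) 1 ∪ Set.Ioi (1:ℝ) = Set.Ioi 0 := Set.Ioc_union_Ioi_eq_Ioi zero_le_one
  have hdisj : Disjoint (Set.Ioc (0:ℝ) 1) (Set.Ioi 1) :=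
    (Set.Iic_disjoint_Ioi le_rfl).mono_left Set.Ioc_subset_Iic_self
  have h1 : ∫ x in Set.Ioc (0:ℝ) 1, (1 + x) ^ (-a) ≤ 1 := by
    have := setIntegral_mono_on (hIoi.mono_set (by rw [← hsplit]; exact Set.subset_union_left))
      (integrableOn_const (by simp))
      measurableSet_Ioc (fun x hx => Real.rpow_le_one_of_one_le_of_nonpos
        (by have := hx.1; linarith) (by linarith))
    simpa using this
  have h2 : ∫ x in Set.Ioi (1:ℝ), (1 + x) ^ (-a) ≤ 1 / (a - 1) := by
    have hmono := setIntegral_mono_on (hIoi.mono_set (by rw [← hsplit]; exact Set.subset_union_right))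
      (integrableOn_Ioi_rpow_of_lt (by linarith : -a < -1) one_pos)
      measurableSet_Ioi (fun x hx => by
        have hx1 : (1:ℝ) < x := hx
        exact Real.rpow_le_rpow_of_nonpos (by linarith) (by linarith) (by linarith))
    have hval : ∫ x in Set.Ioi (1:ℝ), x ^ (-a) = 1 / (a - 1) := by
      rw [integral_Ioi_rpow_of_lt (by linarith : -a < -1) one_pos]
      rw [Real.one_rpow, show -a+1 = -(a-1) by ring, show -(1:ℝ) / -(a-1) = 1/(a-1) from neg_div_neg_eq 1 (a-1)]
    linarith [hmono, hval.le, hval.ge]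
  have hsum : ∫ x in Set.Ioi (0:ℝ), (1 + x) ^ (-a) ≤ 1 + 1 / (a - 1) := by
    rw [← hsplit, setIntegral_union hdisj measurableSet_Ioi
      (hIoi.mono_set (by rw [← hsplit]; exact Set.subset_union_left))
      (hIoi.mono_set (by rw [← hsplit]; exact Set.subset_union_right))]
    linarith
  have : 1 + 1 / (a - 1) = a / (a - 1) := by field_simp; ring
  nlinarith [hsum]

lemma scaled_integrable {a δ : ℝ} (ha : 1 < a) (hδ : 0 < δ) :
    Integrable (fun u : ℝ => (1 + |u| / δ) ^ (-a)) volume := by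
  have := (base_integrable ha).comp_div (R := δ) hδ.ne'
  refine this.congr (Filter.Eventually.of_forall fun u => ?_)
  show (1 + |u / δ|) ^ (-a) = (1 + |u| / δ) ^ (-a)
  rw [abs_div, abs_of_pos hδ]

lemma scaled_bound {a δ : ℝ} (ha : 1 < a) (hδ : 0 < δ) :
    ∫ u : ℝ, (1 + |u| / δ) ^ (-a) ≤ δ * (2 * (a / (a - 1))) := by
  have hrw : (fun u : ℝ => (1 + |u| / δ) ^ (-a))
      = fun u : ℝ => (fun v : ℝ => (1 + |v|) ^ (-a)) (u / δ) := by
    funext u; show (1 + |u| / δ) ^ (-a) = (1 + |u / δ|) ^ (-a); rw [abs_div, abs_of_pos hδ]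
  rw [hrw, MeasureTheory.Measure.integral_comp_div (fun v : ℝ => (1 + |v|) ^ (-a)) δ]
  rw [abs_of_pos hδ, smul_eq_mul]
  exact mul_le_mul_of_nonneg_left (base_bound ha) hδ.le

lemma memℒp_of_integrable_rpow {p : ℝ} (hp : 0 < p) {f : ℝ → ℝ}
    (hfm : AEStronglyMeasurable f volume) (hf0 : ∀ x, 0 ≤ f x)
    (hfi : Integrable (fun x => f x ^ p) volume) :
    MemLp f (ENNReal.ofReal p) volume := by
  have hp0 : ENNReal.ofReal p ≠ 0 := by simp [ENNReal.ofReal_eq_zero, not_le, hp]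
  have hpt : ENNReal.ofReal p ≠ ⊤ := ENNReal.ofReal_ne_top
  rw [← memLp_norm_rpow_iff (q := ENNReal.ofReal p) hfm hp0 hpt,
    ENNReal.div_self hp0 hpt, memLp_one_iff_integrable]
  refine hfi.congr (Filter.Eventually.of_forall fun x => ?_)
  show f x ^ p = ‖f x‖ ^ (ENNReal.ofReal p).toReal
  rw [ENNReal.toReal_ofReal hp.le, Real.norm_of_nonneg (hf0 x)]

open scoped ENNReal

lemma tile_bound {r' M δ : ℝ} (hr'₁ : 1 < r') (hM1 : 1 < M) (hδ : 0 < δ)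
    (t0 : ℝ) (h φ : ℝ → ℂ) (hmem : MemLp h (ENNReal.ofReal r') volume)
    (hφle : ∀ y, ‖φ y‖ ≤ δ⁻¹ * (1 + |y| / δ) ^ (-M))
    {x : ℝ} (hx : x ∈ Set.Icc t0 (t0 + δ)) :
    ‖∫ y, h y * φ (x - y)‖ ^ r' ≤ (2 * (M / (M - 1))) ^ (r' - 1) *
      (δ⁻¹ * ∫ z, ‖h z‖ ^ r' * (1 + Metric.infDist z (Set.Icc t0 (t0 + δ)) / δ) ^ (-M)) := by
  have hr'0 : (0:ℝ) < r' := by linarith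
  set c : ℝ := 2 * (M / (M - 1)) with hcdef
  have hc : 0 < c := by
    have h1 : (0:ℝ) < M - 1 := by linarith
    have h2 : (0:ℝ) < M := by linarith
    positivity
  -- basic objects
  have hH : Integrable (fun z => ‖h z‖ ^ r') volume := by
    have h0 : (ENNReal.ofReal r') ≠ 0 := by
      simp only [ne_eq, ENNReal.ofReal_eq_zero, not_le]; linarith
    have := hmem.integrable_norm_rpow h0 ENNReal.ofReal_ne_top
    simpa [ENNReal.toReal_ofReal hr'0.le] using this
  have hHnn : ∀ z : ℝ, 0 ≤ ‖h z‖ ^ r' := fun z => Real.rpow_nonneg (norm_nonneg _) _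
  set w : ℝ → ℝ := fun y => δ⁻¹ * (1 + |x - y| / δ) ^ (-M) with hwdef
  have hbase_pos : ∀ y : ℝ, (0:ℝ) < 1 + |x - y| / δ := fun y => by positivity
  have hw_pos : ∀ y, 0 < w y := fun y =>
    mul_pos (inv_pos.2 hδ) (Real.rpow_pos_of_pos (hbase_pos y) _)
  have hw_cont : Continuous w := by
    apply continuous_const.mul
    apply Continuous.rpow_const
    · exact continuous_const.add (((continuous_const.sub continuous_id).abs).div_const δ)
    · exact fun y => Or.inl (hbase_pos y).ne'
  have hρ_int : Integrable (fun y : ℝ => (1 + |x - y| / δ) ^ (-M)) volume :=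
    (scaled_integrable hM1 hδ).comp_sub_left x
  have hw_int : Integrable w volume := hρ_int.const_mul δ⁻¹
  have hw_tot : ∫ y, w y ≤ c := by
    have h1 : ∫ y, w y = δ⁻¹ * ∫ y : ℝ, (1 + |x - y| / δ) ^ (-M) := integral_const_mul _ _
    have h2 : ∫ y : ℝ, (1 + |x - y| / δ) ^ (-M) = ∫ u : ℝ, (1 + |u| / δ) ^ (-M) :=
      integral_sub_left_eq_self (fun u : ℝ => (1 + |u| / δ) ^ (-M)) volume x
    rw [h1, h2]
    calc δ⁻¹ * ∫ u : ℝ, (1 + |u| / δ) ^ (-M) ≤ δ⁻¹ * (δ * c) :=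
          mul_le_mul_of_nonneg_left (scaled_bound hM1 hδ) (inv_nonneg.2 hδ.le)
      _ = c := by field_simp
  have hptw : ∀ y, ‖h y * φ (x - y)‖ ≤ ‖h y‖ * w y := fun y => by
    rw [norm_mul]
    exact mul_le_mul_of_nonneg_left (hφle (x - y)) (norm_nonneg _)
  -- conjugate exponent
  have hq := Real.HolderConjugate.conjExponent hr'₁
  set q : ℝ := Real.conjExponent r' with hqdef
  have hq_pos : 0 < q := hq.symm.pos
  set f1 : ℝ → ℝ := fun y => ‖h y‖ * w y ^ r'⁻¹ with hf1def
  set g1 : ℝ → ℝ := fun y => w y ^ q⁻¹ with hg1def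
  have hf1_nn : ∀ y, 0 ≤ f1 y := fun y =>
    mul_nonneg (norm_nonneg _) (Real.rpow_nonneg (hw_pos y).le _)
  have hg1_nn : ∀ y, 0 ≤ g1 y := fun y => Real.rpow_nonneg (hw_pos y).le _
  have hwr_cont : ∀ e : ℝ, Continuous fun y => w y ^ e := fun e =>
    hw_cont.rpow_const fun y => Or.inl (hw_pos y).ne'
  have hf1_m : AEStronglyMeasurable f1 volume :=
    hmem.1.norm.mul (hwr_cont r'⁻¹).aestronglyMeasurable
  have hg1_m : AEStronglyMeasurable g1 volume := (hwr_cont q⁻¹).aestronglyMeasurable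
  have hf1_pow : (fun y => f1 y ^ r') = fun y => ‖h y‖ ^ r' * w y := by
    funext y
    rw [hf1def, Real.mul_rpow (norm_nonneg _) (Real.rpow_nonneg (hw_pos y).le _),
      ← Real.rpow_mul (hw_pos y).le, inv_mul_cancel₀ (ne_of_gt hr'0), Real.rpow_one]
  have hg1_pow : (fun y => g1 y ^ q) = w := by
    funext y
    rw [hg1def, ← Real.rpow_mul (hw_pos y).le, inv_mul_cancel₀ (ne_of_gt hq_pos), Real.rpow_one]
  have hHw_int : Integrable (fun y => ‖h y‖ ^ r' * w y) volume := by
    have hb : ∀ y, ‖w y‖ ≤ δ⁻¹ := fun y => by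
      rw [Real.norm_of_nonneg (hw_pos y).le, hwdef]
      calc δ⁻¹ * (1 + |x - y| / δ) ^ (-M) ≤ δ⁻¹ * 1 :=
            mul_le_mul_of_nonneg_left (Real.rpow_le_one_of_one_le_of_nonpos
              (le_add_of_nonneg_right (by positivity)) (by linarith)) (inv_nonneg.2 hδ.le)
        _ = δ⁻¹ := mul_one _
    have := hH.bdd_mul hw_cont.aestronglyMeasurable (c := δ⁻¹) (Filter.Eventually.of_forall hb)
    exact this.congr (Filter.Eventually.of_forall fun y => mul_comm _ _)
  have hf1_mem : MemLp f1 (ENNReal.ofReal r') volume :=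
    memℒp_of_integrable_rpow hr'0 hf1_m hf1_nn (by rw [hf1_pow]; exact hHw_int)
  have hg1_mem : MemLp g1 (ENNReal.ofReal q) volume :=
    memℒp_of_integrable_rpow hq_pos hg1_m hg1_nn (by rw [hg1_pow]; exact hw_int)
  have hprod : ∀ y, f1 y * g1 y = ‖h y‖ * w y := fun y => by
    rw [hf1def, hg1def, mul_assoc, ← Real.rpow_add (hw_pos y), hq.inv_add_inv_eq_one, Real.rpow_one]
  have hhw_int : Integrable (fun y => ‖h y‖ * w y) volume := by
    have hpqr : (1:ℝ≥0∞) / 1 = 1 / ENNReal.ofReal q + 1 / ENNReal.ofReal r' := by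
      rw [one_div, one_div, one_div, inv_one]
      exact (hq.symm.inv_add_inv_ennreal).symm
    have := memLp_one_iff_integrable.mp (hf1_mem.smul hg1_mem (hpqr := ⟨by simpa only [one_div, inv_one] using hpqr.symm⟩))
    refine this.congr (Filter.Eventually.of_forall fun y => ?_)
    show g1 y * f1 y = ‖h y‖ * w y
    rw [mul_comm]; exact hprod y
  have hconv : ‖∫ y, h y * φ (x - y)‖ ≤ ∫ y, ‖h y‖ * w y :=
    norm_integral_le_of_norm_le hhw_int (Filter.Eventually.of_forall hptw)
  have hAnn : 0 ≤ ∫ y, ‖h y‖ * w y :=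
    integral_nonneg fun y => mul_nonneg (norm_nonneg _) (hw_pos y).le
  have hA_nn : 0 ≤ ∫ y, ‖h y‖ ^ r' * w y :=
    integral_nonneg fun y => mul_nonneg (hHnn y) (hw_pos y).le
  have hB_nn : 0 ≤ ∫ y, w y := integral_nonneg fun y => (hw_pos y).le
  have hHold : ∫ y, ‖h y‖ * w y ≤
      (∫ y, ‖h y‖ ^ r' * w y) ^ (1/r') * (∫ y, w y) ^ (1/q) := by
    have hh0 := integral_mul_le_Lp_mul_Lq_of_nonneg hq (Filter.Eventually.of_forall hf1_nn)
      (Filter.Eventually.of_forall hg1_nn) hf1_mem hg1_mem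
    rw [hf1_pow, hg1_pow] at hh0
    calc ∫ y, ‖h y‖ * w y = ∫ y, f1 y * g1 y :=
          (integral_congr_ae (Filter.Eventually.of_forall hprod)).symm
      _ ≤ _ := hh0
  have hqr : (1/q) * r' = r' - 1 := by
    have h1 : q⁻¹ = 1 - r'⁻¹ := by
      have := hq.inv_add_inv_eq_one; linarith
    rw [one_div, h1, sub_mul, one_mul, inv_mul_cancel₀ (ne_of_gt hr'0)]
  have hpow : (∫ y, ‖h y‖ * w y) ^ r' ≤
      (∫ y, ‖h y‖ ^ r' * w y) * (∫ y, w y) ^ (r' - 1) := by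
    calc (∫ y, ‖h y‖ * w y) ^ r'
        ≤ ((∫ y, ‖h y‖ ^ r' * w y) ^ (1/r') * (∫ y, w y) ^ (1/q)) ^ r' :=
          Real.rpow_le_rpow hAnn hHold hr'0.le
      _ = ((∫ y, ‖h y‖ ^ r' * w y) ^ (1/r')) ^ r' * ((∫ y, w y) ^ (1/q)) ^ r' :=
          Real.mul_rpow (Real.rpow_nonneg hA_nn _) (Real.rpow_nonneg hB_nn _)
      _ = (∫ y, ‖h y‖ ^ r' * w y) * (∫ y, w y) ^ (r' - 1) := by
          rw [← Real.rpow_mul hA_nn, ← Real.rpow_mul hB_nn, hqr, one_div,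
            inv_mul_cancel₀ (ne_of_gt hr'0), Real.rpow_one]
  have hB_le : (∫ y, w y) ^ (r' - 1) ≤ c ^ (r' - 1) :=
    Real.rpow_le_rpow hB_nn hw_tot (by linarith)
  have hA_le : (∫ y, ‖h y‖ ^ r' * w y) ≤
      δ⁻¹ * ∫ z, ‖h z‖ ^ r' * (1 + Metric.infDist z (Set.Icc t0 (t0 + δ)) / δ) ^ (-M) := by
    have hu_pos : ∀ z : ℝ, (0:ℝ) < 1 + Metric.infDist z (Set.Icc t0 (t0 + δ)) / δ := fun z => by
      have h0 := Metric.infDist_nonneg (s := Set.Icc t0 (t0 + δ)) (x := z)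
      positivity
    have hu_cont : Continuous fun z : ℝ =>
        (1 + Metric.infDist z (Set.Icc t0 (t0 + δ)) / δ) ^ (-M) := by
      apply Continuous.rpow_const
      · exact continuous_const.add ((Metric.continuous_infDist_pt _).div_const δ)
      · exact fun z => Or.inl (hu_pos z).ne'
    have hHu : Integrable (fun z => ‖h z‖ ^ r' *
        (1 + Metric.infDist z (Set.Icc t0 (t0 + δ)) / δ) ^ (-M)) volume := by
      have hb : ∀ z : ℝ, ‖(1 + Metric.infDist z (Set.Icc t0 (t0 + δ)) / δ) ^ (-M)‖ ≤ 1 := fun z => by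
        rw [Real.norm_of_nonneg (Real.rpow_nonneg (hu_pos z).le _)]
        refine Real.rpow_le_one_of_one_le_of_nonpos ?_ (by linarith)
        have h0 := Metric.infDist_nonneg (s := Set.Icc t0 (t0 + δ)) (x := z)
        have : 0 ≤ Metric.infDist z (Set.Icc t0 (t0 + δ)) / δ := by positivity
        linarith
      have := hH.bdd_mul hu_cont.aestronglyMeasurable (c := 1) (Filter.Eventually.of_forall hb)
      exact this.congr (Filter.Eventually.of_forall fun z => mul_comm _ _)
    have hpt2 : ∀ y, ‖h y‖ ^ r' * w y ≤ δ⁻¹ * (‖h y‖ ^ r' *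
        (1 + Metric.infDist y (Set.Icc t0 (t0 + δ)) / δ) ^ (-M)) := fun y => by
      have hd : Metric.infDist y (Set.Icc t0 (t0 + δ)) ≤ |x - y| := by
        have h0 := Metric.infDist_le_dist_of_mem (x := y) hx
        rwa [Real.dist_eq, abs_sub_comm] at h0
      have h1 : (1 + |x - y| / δ) ^ (-M) ≤
          (1 + Metric.infDist y (Set.Icc t0 (t0 + δ)) / δ) ^ (-M) := by
        apply Real.rpow_le_rpow_of_nonpos (hu_pos y) ?_ (by linarith)
        have : Metric.infDist y (Set.Icc t0 (t0 + δ)) / δ ≤ |x - y| / δ :=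
          div_le_div_of_nonneg_right hd hδ.le
        linarith
      calc ‖h y‖ ^ r' * w y
          = δ⁻¹ * (‖h y‖ ^ r' * (1 + |x - y| / δ) ^ (-M)) := by rw [hwdef]; ring
        _ ≤ _ := by
            apply mul_le_mul_of_nonneg_left
              (mul_le_mul_of_nonneg_left h1 (hHnn y)) (inv_nonneg.2 hδ.le)
    calc (∫ y, ‖h y‖ ^ r' * w y)
        ≤ ∫ y, δ⁻¹ * (‖h y‖ ^ r' *
            (1 + Metric.infDist y (Set.Icc t0 (t0 + δ)) / δ) ^ (-M)) :=
          integral_mono_of_nonneg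
            (Filter.Eventually.of_forall fun y => mul_nonneg (hHnn y) (hw_pos y).le)
            (hHu.const_mul δ⁻¹) (Filter.Eventually.of_forall hpt2)
      _ = δ⁻¹ * ∫ z, ‖h z‖ ^ r' *
            (1 + Metric.infDist z (Set.Icc t0 (t0 + δ)) / δ) ^ (-M) := integral_const_mul _ _
  have hG_nn : 0 ≤ δ⁻¹ * ∫ z, ‖h z‖ ^ r' *
      (1 + Metric.infDist z (Set.Icc t0 (t0 + δ)) / δ) ^ (-M) := by
    apply mul_nonneg (inv_nonneg.2 hδ.le)
    refine integral_nonneg fun z => mul_nonneg (hHnn z) (Real.rpow_nonneg ?_ _)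
    have h0 := Metric.infDist_nonneg (s := Set.Icc t0 (t0 + δ)) (x := z)
    positivity
  calc ‖∫ y, h y * φ (x - y)‖ ^ r'
      ≤ (∫ y, ‖h y‖ * w y) ^ r' := Real.rpow_le_rpow (norm_nonneg _) hconv hr'0.le
    _ ≤ (∫ y, ‖h y‖ ^ r' * w y) * (∫ y, w y) ^ (r' - 1) := hpow
    _ ≤ (∫ y, ‖h y‖ ^ r' * w y) * c ^ (r' - 1) := mul_le_mul_of_nonneg_left hB_le hA_nn
    _ ≤ (δ⁻¹ * ∫ z, ‖h z‖ ^ r' *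
          (1 + Metric.infDist z (Set.Icc t0 (t0 + δ)) / δ) ^ (-M)) * c ^ (r' - 1) :=
        mul_le_mul_of_nonneg_right hA_le (Real.rpow_nonneg hc.le _)
    _ = c ^ (r' - 1) * (δ⁻¹ * ∫ z, ‖h z‖ ^ r' *
          (1 + Metric.infDist z (Set.Icc t0 (t0 + δ)) / δ) ^ (-M)) := mul_comm _ _


lemma sum_tile_weights {M δ : ℝ} (hM : 2 < M) (hδ : 0 < δ) {m : ℕ} {t : Fin m → ℝ} {aJ bJ : ℝ}
    (hab : aJ < bJ) (hsub : ∀ i, Set.Icc (t i) (t i + δ) ⊆ Set.Icc aJ bJ)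
    (hdisj : Pairwise (Function.onFun Disjoint (fun i => Set.Ioo (t i) (t i + δ)))) (z : ℝ) :
    ∑ i : Fin m, (1 + Metric.infDist z (Set.Icc (t i) (t i + δ)) / δ) ^ (-M)
      ≤ 16 * (1 + Metric.infDist z (Set.Icc aJ bJ) / (bJ - aJ)) ^ (-(M - 2)) := by
  have hL : (0:ℝ) < bJ - aJ := by linarith
  have hdJ0 : 0 ≤ Metric.infDist z (Set.Icc aJ bJ) := Metric.infDist_nonneg
  have hΦ_pos : (0:ℝ) < 1 + Metric.infDist z (Set.Icc aJ bJ) / (bJ - aJ) := by positivity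
  have hΦ_nn : (0:ℝ) ≤ (1 + Metric.infDist z (Set.Icc aJ bJ) / (bJ - aJ)) ^ (-(M - 2)) :=
    Real.rpow_nonneg hΦ_pos.le _
  rcases Nat.eq_zero_or_pos m with hm | hm
  · subst hm
    simp only [Finset.univ_eq_empty, Finset.sum_empty]
    exact mul_nonneg (by norm_num) hΦ_nn
  have hu_pos : ∀ i : Fin m, (0:ℝ) < 1 + Metric.infDist z (Set.Icc (t i) (t i + δ)) / δ :=
    fun i => by
      have h0 := Metric.infDist_nonneg (s := Set.Icc (t i) (t i + δ)) (x := z)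
      positivity
  have hδL : δ ≤ bJ - aJ := by
    have h1 := (hsub ⟨0, hm⟩) (Set.left_mem_Icc.mpr (by linarith))
    have h2 := (hsub ⟨0, hm⟩) (Set.right_mem_Icc.mpr (by linarith))
    simp only [Set.mem_Icc] at h1 h2
    linarith
  have step1 : ∀ i : Fin m,
      (1 + Metric.infDist z (Set.Icc (t i) (t i + δ)) / δ) ^ (-M)
        ≤ (1 + Metric.infDist z (Set.Icc aJ bJ) / (bJ - aJ)) ^ (-(M - 2))
          * (1 + Metric.infDist z (Set.Icc (t i) (t i + δ)) / δ) ^ (-(2:ℝ)) := by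
    intro i
    have hdJ : Metric.infDist z (Set.Icc aJ bJ) ≤ Metric.infDist z (Set.Icc (t i) (t i + δ)) :=
      Metric.infDist_le_infDist_of_subset (hsub i) (Set.nonempty_Icc.mpr (by linarith))
    have hbase : 1 + Metric.infDist z (Set.Icc aJ bJ) / (bJ - aJ)
        ≤ 1 + Metric.infDist z (Set.Icc (t i) (t i + δ)) / δ := by
      have hdiv : Metric.infDist z (Set.Icc aJ bJ) / (bJ - aJ)
          ≤ Metric.infDist z (Set.Icc (t i) (t i + δ)) / δ :=
        div_le_div₀ (le_trans hdJ0 hdJ) hdJ hδ hδL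
      linarith
    have heq : (1 + Metric.infDist z (Set.Icc (t i) (t i + δ)) / δ) ^ (-M)
        = (1 + Metric.infDist z (Set.Icc (t i) (t i + δ)) / δ) ^ (-(M - 2))
          * (1 + Metric.infDist z (Set.Icc (t i) (t i + δ)) / δ) ^ (-(2:ℝ)) := by
      rw [← Real.rpow_add (hu_pos i)]
      congr 1
      ring
    rw [heq]
    exact mul_le_mul_of_nonneg_right
      (Real.rpow_le_rpow_of_nonpos hΦ_pos hbase (by linarith))
      (Real.rpow_nonneg (hu_pos i).le _)
  have step2 : ∑ i : Fin m,
      (1 + Metric.infDist z (Set.Icc (t i) (t i + δ)) / δ) ^ (-(2:ℝ)) ≤ 16 := by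
    have hg_int : Integrable (fun w' : ℝ => (1 + |z - w'| / δ) ^ (-(2:ℝ))) volume :=
      (scaled_integrable one_lt_two hδ).comp_sub_left z
    have hg_nn : ∀ w' : ℝ, (0:ℝ) ≤ (1 + |z - w'| / δ) ^ (-(2:ℝ)) :=
      fun w' => Real.rpow_nonneg (by positivity) _
    have hg_tot : ∫ w' : ℝ, (1 + |z - w'| / δ) ^ (-(2:ℝ)) ≤ δ * 4 := by
      have h2 : ∫ w' : ℝ, (1 + |z - w'| / δ) ^ (-(2:ℝ)) = ∫ u : ℝ, (1 + |u| / δ) ^ (-(2:ℝ)) :=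
        integral_sub_left_eq_self (fun u : ℝ => (1 + |u| / δ) ^ (-(2:ℝ))) volume z
      have h3 := scaled_bound (a := 2) one_lt_two hδ
      rw [h2]
      calc ∫ u : ℝ, (1 + |u| / δ) ^ (-(2:ℝ)) ≤ δ * (2 * ((2:ℝ) / (2 - 1))) := h3
        _ = δ * 4 := by norm_num
    have hper : ∀ i : Fin m, (1 + Metric.infDist z (Set.Icc (t i) (t i + δ)) / δ) ^ (-(2:ℝ))
        ≤ (4/δ) * ∫ w' in Set.Ioo (t i) (t i + δ), (1 + |z - w'| / δ) ^ (-(2:ℝ)) := by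
      intro i
      obtain ⟨w₀, hw₀, hdist⟩ := isCompact_Icc.exists_infDist_eq_dist
        (Set.nonempty_Icc.mpr (by linarith : t i ≤ t i + δ)) z
      have hlow : ∀ w' ∈ Set.Ioo (t i) (t i + δ),
          (2 * (1 + Metric.infDist z (Set.Icc (t i) (t i + δ)) / δ)) ^ (-(2:ℝ))
            ≤ (1 + |z - w'| / δ) ^ (-(2:ℝ)) := by
        intro w' hw'
        have h2 : dist w₀ w' ≤ δ := by
          rw [Real.dist_eq, abs_le]
          have ha1 := hw₀.1
          have ha2 := hw₀.2
          have hb1 := hw'.1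
          have hb2 := hw'.2
          constructor <;> linarith
        have h1 : |z - w'| ≤ Metric.infDist z (Set.Icc (t i) (t i + δ)) + δ := by
          rw [hdist]
          calc |z - w'| = dist z w' := (Real.dist_eq _ _).symm
            _ ≤ dist z w₀ + dist w₀ w' := dist_triangle _ _ _
            _ ≤ dist z w₀ + δ := by linarith
        apply Real.rpow_le_rpow_of_nonpos (by positivity) ?_ (by norm_num)
        have hvd : |z - w'| / δ ≤ Metric.infDist z (Set.Icc (t i) (t i + δ)) / δ + 1 := by
          have := div_le_div_of_nonneg_right h1 hδ.le
          rwa [add_div, div_self hδ.ne'] at this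
        have hDnn : 0 ≤ Metric.infDist z (Set.Icc (t i) (t i + δ)) / δ := by
          have h0 := Metric.infDist_nonneg (s := Set.Icc (t i) (t i + δ)) (x := z)
          positivity
        linarith
      have hmono := setIntegral_mono_on
        (integrableOn_const (by rw [Real.volume_Ioo]; exact ENNReal.ofReal_ne_top))
        (hg_int.integrableOn) measurableSet_Ioo hlow
      have hconst : ∫ _ in Set.Ioo (t i) (t i + δ),
          (2 * (1 + Metric.infDist z (Set.Icc (t i) (t i + δ)) / δ)) ^ (-(2:ℝ))
          = δ * (2 * (1 + Metric.infDist z (Set.Icc (t i) (t i + δ)) / δ)) ^ (-(2:ℝ)) := by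
        rw [setIntegral_const, measureReal_def, Real.volume_Ioo, smul_eq_mul, add_sub_cancel_left,
          ENNReal.toReal_ofReal hδ.le]
      have hsplit2 : (2 * (1 + Metric.infDist z (Set.Icc (t i) (t i + δ)) / δ)) ^ (-(2:ℝ))
          = (4:ℝ)⁻¹ * (1 + Metric.infDist z (Set.Icc (t i) (t i + δ)) / δ) ^ (-(2:ℝ)) := by
        rw [Real.mul_rpow (by norm_num) (hu_pos i).le]
        congr 1
        rw [show (-(2:ℝ)) = ((-2:ℤ):ℝ) by norm_num, Real.rpow_intCast]
        norm_num
      have hXI : δ * ((4:ℝ)⁻¹ * (1 + Metric.infDist z (Set.Icc (t i) (t i + δ)) / δ) ^ (-(2:ℝ)))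
          ≤ ∫ w' in Set.Ioo (t i) (t i + δ), (1 + |z - w'| / δ) ^ (-(2:ℝ)) := by
        rw [← hsplit2, ← hconst]
        exact hmono
      calc (1 + Metric.infDist z (Set.Icc (t i) (t i + δ)) / δ) ^ (-(2:ℝ))
          = (4/δ) * (δ * ((4:ℝ)⁻¹
              * (1 + Metric.infDist z (Set.Icc (t i) (t i + δ)) / δ) ^ (-(2:ℝ)))) := by
            have h4 : (4/δ) * δ = 4 := div_mul_cancel₀ 4 hδ.ne'
            calc (1 + Metric.infDist z (Set.Icc (t i) (t i + δ)) / δ) ^ (-(2:ℝ))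
                = ((4/δ) * δ * (4:ℝ)⁻¹)
                  * (1 + Metric.infDist z (Set.Icc (t i) (t i + δ)) / δ) ^ (-(2:ℝ)) := by
                  rw [h4]; norm_num
              _ = (4/δ) * (δ * ((4:ℝ)⁻¹
                  * (1 + Metric.infDist z (Set.Icc (t i) (t i + δ)) / δ) ^ (-(2:ℝ)))) := by ring
        _ ≤ (4/δ) * ∫ w' in Set.Ioo (t i) (t i + δ), (1 + |z - w'| / δ) ^ (-(2:ℝ)) :=
            mul_le_mul_of_nonneg_left hXI (by positivity)
    calc ∑ i : Fin m, (1 + Metric.infDist z (Set.Icc (t i) (t i + δ)) / δ) ^ (-(2:ℝ))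
        ≤ ∑ i : Fin m, (4/δ) * ∫ w' in Set.Ioo (t i) (t i + δ), (1 + |z - w'| / δ) ^ (-(2:ℝ)) :=
          Finset.sum_le_sum fun i _ => hper i
      _ = (4/δ) * ∑ i : Fin m, ∫ w' in Set.Ioo (t i) (t i + δ), (1 + |z - w'| / δ) ^ (-(2:ℝ)) :=
          (Finset.mul_sum _ _ _).symm
      _ = (4/δ) * ∫ w' in ⋃ i ∈ Finset.univ, Set.Ioo (t i) (t i + δ),
            (1 + |z - w'| / δ) ^ (-(2:ℝ)) := by
          rw [integral_biUnion_finset Finset.univ (fun i _ => measurableSet_Ioo)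
            (hdisj.set_pairwise _) (fun i _ => hg_int.integrableOn)]
      _ ≤ (4/δ) * ∫ w' : ℝ, (1 + |z - w'| / δ) ^ (-(2:ℝ)) :=
          mul_le_mul_of_nonneg_left (setIntegral_le_integral hg_int
            (Filter.Eventually.of_forall hg_nn)) (by positivity)
      _ ≤ (4/δ) * (δ * 4) := mul_le_mul_of_nonneg_left hg_tot (by positivity)
      _ = 16 := by field_simp; ring
  calc ∑ i : Fin m, (1 + Metric.infDist z (Set.Icc (t i) (t i + δ)) / δ) ^ (-M)
      ≤ ∑ i : Fin m, (1 + Metric.infDist z (Set.Icc aJ bJ) / (bJ - aJ)) ^ (-(M - 2))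
          * (1 + Metric.infDist z (Set.Icc (t i) (t i + δ)) / δ) ^ (-(2:ℝ)) :=
        Finset.sum_le_sum fun i _ => step1 i
    _ = (1 + Metric.infDist z (Set.Icc aJ bJ) / (bJ - aJ)) ^ (-(M - 2))
          * ∑ i : Fin m, (1 + Metric.infDist z (Set.Icc (t i) (t i + δ)) / δ) ^ (-(2:ℝ)) :=
        (Finset.mul_sum _ _ _).symm
    _ ≤ (1 + Metric.infDist z (Set.Icc aJ bJ) / (bJ - aJ)) ^ (-(M - 2)) * 16 :=
        mul_le_mul_of_nonneg_left step2 hΦ_nn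
    _ = 16 * (1 + Metric.infDist z (Set.Icc aJ bJ) / (bJ - aJ)) ^ (-(M - 2)) := mul_comm _ _


/-- The estimate from Section 3 controlling the contribution of the dualizing function on
the small tiles of a super tile: for pairwise disjoint intervals `Iᵢ = [tᵢ, tᵢ+δ]` of
equal length `δ` contained in `J = [aJ, bJ]` with `mδ ≤ |J|`, and a kernel `φ` with
`|φ(y)| ≤ δ⁻¹(1+|y|/δ)^{-M}`,
`∑ᵢ |Iᵢ| ‖h * φ‖_{L^∞(Iᵢ)}^{r'} ≲_M ∫ |h(z)|^{r'} (1 + dist(z,J)/|J|)^{-N} dz`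
for some `N > 0` depending on `M`. -/
theorem small_tiles_h_estimate (r' M : ℝ) (hr'₁ : 1 < r') (hr'₂ : r' < 2) (hM : 2 < M) :
    ∃ (N : ℝ), 0 < N ∧ ∃ (K : ℝ), 0 < K ∧ ∀ (m : ℕ) (δ : ℝ), 0 < δ → ∀ (t : Fin m → ℝ) (aJ bJ : ℝ),
      aJ < bJ →
      (∀ i, Set.Icc (t i) (t i + δ) ⊆ Set.Icc aJ bJ) →
      Pairwise (Function.onFun Disjoint (fun i => Set.Ioo (t i) (t i + δ))) →
      m * δ ≤ bJ - aJ →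
      ∀ (h : ℝ → ℂ) (φ : ℝ → ℂ),
        MemLp h (ENNReal.ofReal r') volume →
        Integrable φ volume →
        (∀ y : ℝ, ‖φ y‖ ≤ δ⁻¹ * (1 + |y| / δ) ^ (-M)) →
        ∑ i : Fin m, δ * (⨆ x ∈ Set.Icc (t i) (t i + δ), ‖∫ y, h y * φ (x - y)‖ ^ r')
          ≤ K * ∫ z, ‖h z‖ ^ r' *
              (1 + Metric.infDist z (Set.Icc aJ bJ) / (bJ - aJ)) ^ (-N) := by
  have hM1 : (1:ℝ) < M := by linarith
  have hr'0 : (0:ℝ) < r' := by linarith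
  have hc : (0:ℝ) < 2 * (M / (M - 1)) := by
    have h1 : (0:ℝ) < M - 1 := by linarith
    have h2 : (0:ℝ) < M := by linarith
    positivity
  have hc1 : (0:ℝ) < (2 * (M / (M - 1))) ^ (r' - 1) := Real.rpow_pos_of_pos hc _
  refine ⟨M - 2, by linarith, 16 * (2 * (M / (M - 1))) ^ (r' - 1), by positivity, ?_⟩
  intro m δ hδ t aJ bJ hab hsub hdisj hmδ h φ hmem hφ hφle
  have hL : (0:ℝ) < bJ - aJ := by linarith
  have hH : Integrable (fun z => ‖h z‖ ^ r') volume := by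
    have h0 : (ENNReal.ofReal r') ≠ 0 := by
      simp only [ne_eq, ENNReal.ofReal_eq_zero, not_le]; linarith
    have := hmem.integrable_norm_rpow h0 ENNReal.ofReal_ne_top
    simpa [ENNReal.toReal_ofReal hr'0.le] using this
  have hHnn : ∀ z : ℝ, 0 ≤ ‖h z‖ ^ r' := fun z => Real.rpow_nonneg (norm_nonneg _) _
  have hu_pos : ∀ (i : Fin m) (z : ℝ),
      (0:ℝ) < 1 + Metric.infDist z (Set.Icc (t i) (t i + δ)) / δ := fun i z => by
    have h0 := Metric.infDist_nonneg (s := Set.Icc (t i) (t i + δ)) (x := z)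
    positivity
  have hu_cont : ∀ i : Fin m, Continuous fun z : ℝ =>
      (1 + Metric.infDist z (Set.Icc (t i) (t i + δ)) / δ) ^ (-M) := fun i => by
    apply Continuous.rpow_const
    · exact continuous_const.add ((Metric.continuous_infDist_pt _).div_const δ)
    · exact fun z => Or.inl (hu_pos i z).ne'
  have hHu : ∀ i : Fin m, Integrable (fun z => ‖h z‖ ^ r' *
      (1 + Metric.infDist z (Set.Icc (t i) (t i + δ)) / δ) ^ (-M)) volume := fun i => by
    have hb : ∀ z : ℝ, ‖(1 + Metric.infDist z (Set.Icc (t i) (t i + δ)) / δ) ^ (-M)‖ ≤ 1 :=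
      fun z => by
        rw [Real.norm_of_nonneg (Real.rpow_nonneg (hu_pos i z).le _)]
        refine Real.rpow_le_one_of_one_le_of_nonpos ?_ (by linarith)
        have h0 := Metric.infDist_nonneg (s := Set.Icc (t i) (t i + δ)) (x := z)
        have : 0 ≤ Metric.infDist z (Set.Icc (t i) (t i + δ)) / δ := by positivity
        linarith
    have := hH.bdd_mul (hu_cont i).aestronglyMeasurable (c := 1) (Filter.Eventually.of_forall hb)
    exact this.congr (Filter.Eventually.of_forall fun z => mul_comm _ _)
  have key : ∀ i : Fin m, δ * (⨆ x ∈ Set.Icc (t i) (t i + δ), ‖∫ y, h y * φ (x - y)‖ ^ r')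
      ≤ (2 * (M / (M - 1))) ^ (r' - 1) *
        ∫ z, ‖h z‖ ^ r' * (1 + Metric.infDist z (Set.Icc (t i) (t i + δ)) / δ) ^ (-M) := by
    intro i
    have hGnn : 0 ≤ ∫ z, ‖h z‖ ^ r' *
        (1 + Metric.infDist z (Set.Icc (t i) (t i + δ)) / δ) ^ (-M) :=
      integral_nonneg fun z => mul_nonneg (hHnn z) (Real.rpow_nonneg (hu_pos i z).le _)
    have hBnn : 0 ≤ (2 * (M / (M - 1))) ^ (r' - 1) * (δ⁻¹ * ∫ z, ‖h z‖ ^ r' *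
        (1 + Metric.infDist z (Set.Icc (t i) (t i + δ)) / δ) ^ (-M)) :=
      mul_nonneg hc1.le (mul_nonneg (inv_nonneg.2 hδ.le) hGnn)
    have hsup : (⨆ x ∈ Set.Icc (t i) (t i + δ), ‖∫ y, h y * φ (x - y)‖ ^ r')
        ≤ (2 * (M / (M - 1))) ^ (r' - 1) * (δ⁻¹ * ∫ z, ‖h z‖ ^ r' *
          (1 + Metric.infDist z (Set.Icc (t i) (t i + δ)) / δ) ^ (-M)) := by
      refine Real.iSup_le (fun x => Real.iSup_le (fun hx => ?_) hBnn) hBnn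
      exact tile_bound hr'₁ hM1 hδ (t i) h φ hmem hφle hx
    calc δ * (⨆ x ∈ Set.Icc (t i) (t i + δ), ‖∫ y, h y * φ (x - y)‖ ^ r')
        ≤ δ * ((2 * (M / (M - 1))) ^ (r' - 1) * (δ⁻¹ * ∫ z, ‖h z‖ ^ r' *
            (1 + Metric.infDist z (Set.Icc (t i) (t i + δ)) / δ) ^ (-M))) :=
          mul_le_mul_of_nonneg_left hsup hδ.le
      _ = (2 * (M / (M - 1))) ^ (r' - 1) *
            ∫ z, ‖h z‖ ^ r' * (1 + Metric.infDist z (Set.Icc (t i) (t i + δ)) / δ) ^ (-M) := by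
          rw [show δ * ((2 * (M / (M - 1))) ^ (r' - 1) * (δ⁻¹ * ∫ z, ‖h z‖ ^ r' *
              (1 + Metric.infDist z (Set.Icc (t i) (t i + δ)) / δ) ^ (-M)))
            = (δ * δ⁻¹) * ((2 * (M / (M - 1))) ^ (r' - 1) * ∫ z, ‖h z‖ ^ r' *
              (1 + Metric.infDist z (Set.Icc (t i) (t i + δ)) / δ) ^ (-M)) by ring,
            mul_inv_cancel₀ hδ.ne', one_mul]
  have hΦ_pos : ∀ z : ℝ, (0:ℝ) < 1 + Metric.infDist z (Set.Icc aJ bJ) / (bJ - aJ) := fun z => by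
    have h0 := Metric.infDist_nonneg (s := Set.Icc aJ bJ) (x := z)
    positivity
  have hΦ16_cont : Continuous fun z : ℝ =>
      (16:ℝ) * (1 + Metric.infDist z (Set.Icc aJ bJ) / (bJ - aJ)) ^ (-(M - 2)) := by
    apply continuous_const.mul
    apply Continuous.rpow_const
    · exact continuous_const.add ((Metric.continuous_infDist_pt _).div_const _)
    · exact fun z => Or.inl (hΦ_pos z).ne'
  have hHΦ : Integrable (fun z => ‖h z‖ ^ r' *
      (16 * (1 + Metric.infDist z (Set.Icc aJ bJ) / (bJ - aJ)) ^ (-(M - 2)))) volume := by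
    have hb : ∀ z : ℝ,
        ‖(16:ℝ) * (1 + Metric.infDist z (Set.Icc aJ bJ) / (bJ - aJ)) ^ (-(M - 2))‖ ≤ 16 :=
      fun z => by
        rw [Real.norm_of_nonneg (mul_nonneg (by norm_num) (Real.rpow_nonneg (hΦ_pos z).le _))]
        have h1 : (1 + Metric.infDist z (Set.Icc aJ bJ) / (bJ - aJ)) ^ (-(M - 2)) ≤ 1 := by
          refine Real.rpow_le_one_of_one_le_of_nonpos ?_ (by linarith)
          have h0 := Metric.infDist_nonneg (s := Set.Icc aJ bJ) (x := z)
          have : 0 ≤ Metric.infDist z (Set.Icc aJ bJ) / (bJ - aJ) := by positivity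
          linarith
        linarith
    have := hH.bdd_mul hΦ16_cont.aestronglyMeasurable (c := 16) (Filter.Eventually.of_forall hb)
    exact this.congr (Filter.Eventually.of_forall fun z => mul_comm _ _)
  calc ∑ i : Fin m, δ * (⨆ x ∈ Set.Icc (t i) (t i + δ), ‖∫ y, h y * φ (x - y)‖ ^ r')
      ≤ ∑ i : Fin m, (2 * (M / (M - 1))) ^ (r' - 1) *
          ∫ z, ‖h z‖ ^ r' * (1 + Metric.infDist z (Set.Icc (t i) (t i + δ)) / δ) ^ (-M) :=
        Finset.sum_le_sum fun i _ => key i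
    _ = (2 * (M / (M - 1))) ^ (r' - 1) * ∑ i : Fin m,
          ∫ z, ‖h z‖ ^ r' * (1 + Metric.infDist z (Set.Icc (t i) (t i + δ)) / δ) ^ (-M) := by
        rw [Finset.mul_sum]
    _ = (2 * (M / (M - 1))) ^ (r' - 1) * ∫ z, ∑ i : Fin m,
          ‖h z‖ ^ r' * (1 + Metric.infDist z (Set.Icc (t i) (t i + δ)) / δ) ^ (-M) := by
        rw [integral_finset_sum Finset.univ (fun i _ => hHu i)]
    _ ≤ (2 * (M / (M - 1))) ^ (r' - 1) * ∫ z, ‖h z‖ ^ r' *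
          (16 * (1 + Metric.infDist z (Set.Icc aJ bJ) / (bJ - aJ)) ^ (-(M - 2))) := by
        refine mul_le_mul_of_nonneg_left ?_ hc1.le
        refine integral_mono_of_nonneg
          (Filter.Eventually.of_forall fun z => Finset.sum_nonneg fun i _ =>
            mul_nonneg (hHnn z) (Real.rpow_nonneg (hu_pos i z).le _))
          hHΦ (Filter.Eventually.of_forall fun z => ?_)
        show (∑ i : Fin m, ‖h z‖ ^ r' *
            (1 + Metric.infDist z (Set.Icc (t i) (t i + δ)) / δ) ^ (-M))
          ≤ ‖h z‖ ^ r' * (16 * (1 + Metric.infDist z (Set.Icc aJ bJ) / (bJ - aJ)) ^ (-(M - 2)))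
        rw [← Finset.mul_sum]
        exact mul_le_mul_of_nonneg_left (sum_tile_weights hM hδ hab hsub hdisj z) (hHnn z)
    _ = 16 * (2 * (M / (M - 1))) ^ (r' - 1) * ∫ z, ‖h z‖ ^ r' *
          (1 + Metric.infDist z (Set.Icc aJ bJ) / (bJ - aJ)) ^ (-(M - 2)) := by
        rw [show (fun z => ‖h z‖ ^ r' *
            (16 * (1 + Metric.infDist z (Set.Icc aJ bJ) / (bJ - aJ)) ^ (-(M - 2))))
          = fun z => (16:ℝ) * (‖h z‖ ^ r' *
            (1 + Metric.infDist z (Set.Icc aJ bJ) / (bJ - aJ)) ^ (-(M - 2)))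
          from funext fun z => by ring, integral_const_mul]
        ring
end

section
/- Let $f \in L^2(\mathbb{R})$ have Fourier transform supported in an interval of length $L$, let $I$ be an interval with $|I| = L^{-1}$, and let $I_\rho \subset I$ be a subinterval. Then for every $N > 0$, $$\frac{\|f\|_{L^2(I_\rho)}}{|I_\rho|^{1/2}} \lesssim_N \sum_{\mathfrak{n} \in \mathbb{Z}} (1 + |\mathfrak{n}|)^{-N} \frac{1}{|I|}\int_{I + \mathfrak{n}|I|} |f(y)|\, dy.$$ -/
open MeasureTheory

open Set Complex SchwartzMap
open scoped Real FourierTransform ContDiff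

noncomputable section

/-- A fixed bump function: equal to `1` on `[-3/2, 3/2]`, supported in `[-2, 2]`. -/
def mcBump : ContDiffBump (0:ℝ) := ⟨3/2, 2, by norm_num, by norm_num⟩

/-- The bump function, as a complex-valued Schwartz function. -/
def mcPsi : SchwartzMap ℝ ℂ where
  toFun x := (mcBump x : ℂ)
  smooth' := Complex.ofRealCLM.contDiff.comp (mcBump.contDiff (n := (⊤:ℕ∞)))
  decay' := by
    intro k n
    have hsm : ContDiff ℝ ∞ (fun x : ℝ => (mcBump x : ℂ)) :=
      Complex.ofRealCLM.contDiff.comp (mcBump.contDiff (n := (⊤:ℕ∞)))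
    have hsupp : HasCompactSupport (fun x : ℝ => (mcBump x : ℂ)) :=
      mcBump.hasCompactSupport.comp_left (g := fun r : ℝ => (r:ℂ)) (by simp)
    have hG : Continuous (fun x : ℝ => ‖x‖ ^ k * ‖iteratedFDeriv ℝ n (fun x : ℝ => (mcBump x : ℂ)) x‖) := by
      exact ((continuous_norm.pow k)).mul ((hsm.continuous_iteratedFDeriv (mod_cast le_top)).norm)
    have hGs : HasCompactSupport (fun x : ℝ => ‖x‖ ^ k * ‖iteratedFDeriv ℝ n (fun x : ℝ => (mcBump x : ℂ)) x‖) :=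
      ((hsupp.iteratedFDeriv n).norm).mul_left
    obtain ⟨C, hC⟩ := hG.bounded_above_of_compact_support hGs
    exact ⟨C, fun x => (le_abs_self _).trans ((Real.norm_eq_abs _ ▸ hC x))⟩

lemma mcPsi_apply (x : ℝ) : mcPsi x = (mcBump x : ℂ) := rfl

lemma mcPsi_one {x : ℝ} (hx : x ∈ Icc (0:ℝ) 1) : mcPsi x = 1 := by
  have hr : mcBump.rIn = 3/2 := rfl
  have : mcBump x = 1 := mcBump.one_of_mem_closedBall (by
    simp only [Metric.mem_closedBall, Real.dist_eq, sub_zero, hr]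
    rw [abs_le]; constructor <;> [linarith [hx.1]; linarith [hx.2]])
  rw [mcPsi_apply, this, Complex.ofReal_one]

/-- The Fourier transform of the bump. -/
def mcPhi : SchwartzMap ℝ ℂ := 𝓕 mcPsi

lemma mcPhi_eq (v : ℝ) : mcPhi v = 𝓕 (⇑mcPsi) v := by
  rw [mcPhi, SchwartzMap.fourier_coe]

lemma schwartz_decay_rpow (Φ : SchwartzMap ℝ ℂ) (N : ℝ) :
    ∃ C > 0, ∀ v : ℝ, ‖Φ v‖ ≤ C * (1 + |v|) ^ (-N) := by
  obtain ⟨C₀, hC₀⟩ := Φ.decay 0 0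
  obtain ⟨C₁, hC₁⟩ := Φ.decay ⌈N⌉₊ 0
  have hC₀' : ∀ x : ℝ, ‖Φ x‖ ≤ C₀ := by
    intro x; have := hC₀.2 x; simpa [norm_iteratedFDeriv_zero] using this
  have hC₁' : ∀ x : ℝ, |x| ^ ⌈N⌉₊ * ‖Φ x‖ ≤ C₁ := by
    intro x; have := hC₁.2 x; simpa [norm_iteratedFDeriv_zero, Real.norm_eq_abs] using this
  have h0 : 0 ≤ C₀ := le_trans (norm_nonneg _) (hC₀' 0)
  have h1 : 0 ≤ C₁ := by
    have := hC₁' 0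
    simpa using le_trans (by positivity) this
  set k := ⌈N⌉₊ with hk
  refine ⟨2 ^ k * (C₀ + C₁) + 1, by positivity, fun v => ?_⟩
  have hb : (1:ℝ) ≤ 1 + |v| := le_add_of_nonneg_right (abs_nonneg v)
  have hbpos : (0:ℝ) < 1 + |v| := by positivity
  have key : ‖Φ v‖ * (1 + |v|) ^ N ≤ 2 ^ k * (C₀ + C₁) := by
    have step1 : (1 + |v|) ^ N ≤ (1 + |v|) ^ (k:ℝ) :=
      Real.rpow_le_rpow_of_exponent_le hb (Nat.le_ceil N)
    have step1' : (1 + |v|) ^ (k:ℝ) = (1 + |v|) ^ k := Real.rpow_natCast _ _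
    have step2 : (1 + |v|) ^ k ≤ 2 ^ k * max 1 |v| ^ k := by
      rw [← mul_pow]
      apply pow_le_pow_left₀ (by positivity)
      rcases le_total (|v|) 1 with h | h
      · rw [max_eq_left h]; linarith
      · rw [max_eq_right h]; linarith
    have step3 : max 1 |v| ^ k * ‖Φ v‖ ≤ C₀ + C₁ := by
      rcases le_total (|v|) 1 with h | h
      · rw [max_eq_left h, one_pow, one_mul]
        linarith [hC₀' v]
      · rw [max_eq_right h]
        linarith [hC₁' v, hC₀' v]
    calc ‖Φ v‖ * (1 + |v|) ^ N ≤ ‖Φ v‖ * ((1 + |v|) ^ k) := by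
          rw [← step1']; exact mul_le_mul_of_nonneg_left step1 (norm_nonneg _)
      _ ≤ ‖Φ v‖ * (2 ^ k * max 1 |v| ^ k) := mul_le_mul_of_nonneg_left step2 (norm_nonneg _)
      _ = 2 ^ k * (max 1 |v| ^ k * ‖Φ v‖) := by ring
      _ ≤ 2 ^ k * (C₀ + C₁) := by
          apply mul_le_mul_of_nonneg_left step3 (by positivity)
  have hrpos : (0:ℝ) < (1 + |v|) ^ N := Real.rpow_pos_of_pos hbpos N
  have hEq : ‖Φ v‖ = (‖Φ v‖ * (1 + |v|) ^ N) * (1 + |v|) ^ (-N) := by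
    rw [Real.rpow_neg hbpos.le, mul_assoc, mul_inv_cancel₀ hrpos.ne', mul_one]
  rw [hEq]
  have hrn : (0:ℝ) ≤ (1 + |v|) ^ (-N) := Real.rpow_nonneg hbpos.le _
  apply mul_le_mul_of_nonneg_right _ hrn
  linarith [key]

lemma tile_iUnion (t L : ℝ) (hL : 0 < L) :
    ⋃ n : ℤ, Ico (t + n / L) (t + (n + 1) / L) = univ := by
  ext y
  simp only [mem_iUnion, mem_Ico, mem_univ, iff_true]
  refine ⟨⌊L * (y - t)⌋, ?_, ?_⟩
  · have h := Int.floor_le (L * (y - t))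
    have : (⌊L * (y - t)⌋ : ℝ) / L ≤ y - t := by
      rw [div_le_iff₀ hL]; nlinarith
    linarith
  · have h := Int.lt_floor_add_one (L * (y - t))
    have : y - t < ((⌊L * (y - t)⌋ : ℝ) + 1) / L := by
      rw [lt_div_iff₀ hL]; nlinarith
    linarith

lemma tile_disjoint (t L : ℝ) (hL : 0 < L) :
    Pairwise (Function.onFun Disjoint fun n : ℤ => Ico (t + n / L) (t + (n + 1) / L)) := by
  have key : ∀ a b : ℤ, a < b →
      Disjoint (Ico (t + (a:ℝ) / L) (t + ((a:ℝ) + 1) / L)) (Ico (t + (b:ℝ) / L) (t + ((b:ℝ) + 1) / L)) := by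
    intro a b hab
    rw [Set.Ico_disjoint_Ico]
    have hab' : (a:ℝ) + 1 ≤ b := by exact_mod_cast hab
    have h2 : ((a:ℝ) + 1) / L ≤ (b:ℝ) / L := by
      gcongr
    exact le_trans (min_le_left _ _) (by
      apply le_max_of_le_right
      linarith)
  intro i j hij
  rcases lt_or_gt_of_ne hij with h | h
  · exact key _ _ h
  · exact (key _ _ h).symm

end

/-- The 'morally constant' estimate from Section 2: if `f` has Fourier support in an
interval of length `L` and `I = [t, t + 1/L]` is any interval of length `L⁻¹`, then for
any subinterval `[c,d] ⊆ I` the normalized `L²` norm of `f` on `[c,d]` is bounded by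
rapidly decaying shifted `L¹` averages of `f` over the translates `I + 𝔫|I|`. -/
theorem morally_constant_estimate (N : ℝ) (hN : 0 < N) :
    ∃ C > 0, ∀ (f : ℝ → ℂ) (L ωa t c d : ℝ), 0 < L → c < d →
      Continuous f → Integrable f volume → MemLp f 2 volume →
      (∀ ξ : ℝ, ξ ∉ Set.Icc ωa (ωa + L) → FourierTransform.fourier f ξ = 0) →
      Set.Icc c d ⊆ Set.Icc t (t + 1 / L) →
      Real.sqrt ((∫ x in Set.Icc c d, ‖f x‖ ^ 2) / (d - c)) ≤
        C * ∑' 𝔫 : ℤ, (1 + |(𝔫:ℝ)|) ^ (-N) *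
          (L * ∫ y in Set.Icc (t + 𝔫 / L) (t + (𝔫 + 1) / L), ‖f y‖) := by
  obtain ⟨CΦ, hCΦpos, hCΦ⟩ := schwartz_decay_rpow mcPhi N
  refine ⟨CΦ * 2 ^ N, by positivity, ?_⟩
  intro f L ωa t c d hL hcd hfc hfi _hfm hsupp hsub
  set ψL : ℝ → ℂ := fun ξ => mcPsi ((ξ - ωa) / L) with hψLdef
  set K : ℝ → ℂ := fun u =>
    L • (Complex.exp (((2 * π * ωa * u : ℝ) : ℂ) * Complex.I) * mcPhi (-(L * u))) with hKdef
  -- basic facts about 𝓕 f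
  have hFcont : Continuous (𝓕 f) :=
    VectorFourier.fourierIntegral_continuous (L := innerₗ ℝ) Real.continuous_fourierChar (by exact continuous_inner) hfi
  have hFsupp : HasCompactSupport (𝓕 f) :=
    HasCompactSupport.intro isCompact_Icc (fun ξ hξ => hsupp ξ hξ)
  have hFint : Integrable (𝓕 f) := hFcont.integrable_of_hasCompactSupport hFsupp
  -- merging exponentials
  have hmerge : ∀ a b : ℝ, Complex.exp ((a:ℂ) * Complex.I) * Complex.exp ((b:ℂ) * Complex.I)
      = Complex.exp (((a + b : ℝ):ℂ) * Complex.I) := by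
    intro a b; rw [← Complex.exp_add]; push_cast; ring_nf
  -- closed form for the kernel
  have hK : ∀ u : ℝ, (∫ ξ : ℝ, ψL ξ * Complex.exp (((2 * π * ξ * u : ℝ):ℂ) * Complex.I)) = K u := by
    intro u
    have e1 : (∫ ξ : ℝ, ψL ξ * Complex.exp (((2 * π * ξ * u : ℝ):ℂ) * Complex.I))
        = ∫ ξ : ℝ, (fun w => mcPsi (w / L) * Complex.exp (((2 * π * (w + ωa) * u : ℝ):ℂ) * Complex.I)) (ξ - ωa) := by
      congr 1; funext ξ; simp only [hψLdef, sub_add_cancel]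
    rw [e1, integral_sub_right_eq_self
      (fun w => mcPsi (w / L) * Complex.exp (((2 * π * (w + ωa) * u : ℝ):ℂ) * Complex.I)) ωa]
    have e2 : (∫ w : ℝ, mcPsi (w / L) * Complex.exp (((2 * π * (w + ωa) * u : ℝ):ℂ) * Complex.I))
        = ∫ w : ℝ, (fun v => mcPsi v * Complex.exp (((2 * π * (L * v + ωa) * u : ℝ):ℂ) * Complex.I)) (L⁻¹ * w) := by
      congr 1; funext w
      simp only
      rw [show L * (L⁻¹ * w) = w by field_simp, show (L⁻¹ * w) = w / L from (div_eq_inv_mul _ _).symm]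
    rw [e2, MeasureTheory.Measure.integral_comp_inv_mul_left
      (fun v => mcPsi v * Complex.exp (((2 * π * (L * v + ωa) * u : ℝ):ℂ) * Complex.I)) L]
    have e3 : (∫ v : ℝ, mcPsi v * Complex.exp (((2 * π * (L * v + ωa) * u : ℝ):ℂ) * Complex.I))
        = Complex.exp (((2 * π * ωa * u : ℝ):ℂ) * Complex.I) * mcPhi (-(L * u)) := by
      rw [mcPhi_eq, Real.fourier_real_eq_integral_exp_smul, ← MeasureTheory.integral_const_mul]
      congr 1; funext v
      rw [smul_eq_mul, ← mul_assoc, hmerge]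
      rw [show (2 * π * ωa * u + -2 * π * v * -(L * u)) = 2 * π * (L * v + ωa) * u by ring]
      ring
    rw [e3, hKdef, abs_of_pos hL]
  -- norm bound on the kernel
  have hKnorm : ∀ u : ℝ, ‖K u‖ = L * ‖mcPhi (-(L * u))‖ := by
    intro u
    rw [hKdef]; simp only
    rw [norm_smul, norm_mul, Real.norm_eq_abs, abs_of_pos hL,
      Complex.norm_exp_ofReal_mul_I, one_mul]
  have hKbound : ∀ u : ℝ, ‖K u‖ ≤ L * (CΦ * (1 + |L * u|) ^ (-N)) := by
    intro u
    rw [hKnorm u]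
    apply mul_le_mul_of_nonneg_left _ hL.le
    have := hCΦ (-(L * u))
    rwa [abs_neg] at this
  -- the convolution representation
  have hrep : ∀ x : ℝ, f x = ∫ y : ℝ, K (x - y) * f y := by
    intro x
    have h1 : f x = ∫ ξ : ℝ, Complex.exp (((2 * π * ξ * x : ℝ):ℂ) * Complex.I) * 𝓕 f ξ := by
      conv_lhs => rw [← congrFun (hfc.fourierInv_fourier_eq hfi hFint) x]
      rw [Real.fourierInv_eq_fourier_neg, Real.fourier_real_eq_integral_exp_smul]
      congr 1; funext ξ
      rw [smul_eq_mul]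
      congr 2
      push_cast; ring
    have hψ1 : ∀ ξ ∈ Set.Icc ωa (ωa + L), ψL ξ = 1 := by
      intro ξ hξ
      apply mcPsi_one
      constructor
      · exact div_nonneg (by linarith [hξ.1]) hL.le
      · rw [div_le_one hL]; linarith [hξ.2]
    have h2 : f x = ∫ ξ : ℝ, ψL ξ * (Complex.exp (((2 * π * ξ * x : ℝ):ℂ) * Complex.I) * 𝓕 f ξ) := by
      rw [h1]; congr 1; funext ξ
      by_cases hξ : ξ ∈ Set.Icc ωa (ωa + L)
      · rw [hψ1 ξ hξ, one_mul]
      · rw [hsupp ξ hξ, mul_zero, mul_zero]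
    set F : ℝ → ℝ → ℂ := fun ξ y =>
      ψL ξ * (Complex.exp (((2 * π * ξ * (x - y) : ℝ):ℂ) * Complex.I) * f y) with hFdef
    have hg1 : Integrable (fun ξ : ℝ => mcBump ((ξ - ωa)/L)) := by
      apply Continuous.integrable_of_hasCompactSupport
      · exact mcBump.continuous.comp (by fun_prop)
      · apply HasCompactSupport.intro (isCompact_Icc (a := ωa - 2*L) (b := ωa + 2*L))
        intro ξ hξ
        have hns : (ξ - ωa)/L ∉ Function.support mcBump := by
          rw [mcBump.support_eq]
          simp only [Metric.mem_ball, Real.dist_eq, sub_zero, not_lt]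
          have hro : mcBump.rOut = 2 := rfl
          rw [hro, abs_div, abs_of_pos hL, le_div_iff₀ hL]
          simp only [Set.mem_Icc, not_and_or, not_le] at hξ
          rcases hξ with h | h
          · rw [abs_of_neg (by linarith : ξ - ωa < 0)]; linarith
          · rw [abs_of_pos (by linarith : (0:ℝ) < ξ - ωa)]; linarith
        simpa using Function.notMem_support.mp hns
    have hFunc : Integrable (Function.uncurry F) (volume.prod volume) := by
      have hgP : Integrable (fun p : ℝ × ℝ => mcBump ((p.1 - ωa)/L) * ‖f p.2‖) (volume.prod volume) :=
        hg1.mul_prod hfi.norm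
      have hFcont2 : Continuous (Function.uncurry F) := by
        apply Continuous.mul
        · exact (SchwartzMap.continuous mcPsi).comp (by fun_prop)
        · apply Continuous.mul
          · apply Complex.continuous_exp.comp
            fun_prop
          · exact hfc.comp continuous_snd
      apply hgP.mono' hFcont2.aestronglyMeasurable
      filter_upwards with p
      show ‖F p.1 p.2‖ ≤ _
      rw [hFdef]; simp only
      simp only [hψLdef]
      rw [norm_mul, norm_mul, Complex.norm_exp_ofReal_mul_I, one_mul, mcPsi_apply,
        Complex.norm_real, Real.norm_eq_abs, _root_.abs_of_nonneg mcBump.nonneg]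
    have hpt : ∀ ξ y : ℝ, ψL ξ * (Complex.exp (((2*π*ξ*x : ℝ):ℂ) * Complex.I) *
        (Complex.exp (((-2*π*y*ξ : ℝ):ℂ) * Complex.I) * f y)) = F ξ y := by
      intro ξ y
      rw [hFdef]; simp only
      rw [← mul_assoc (Complex.exp _), hmerge,
        show (2*π*ξ*x + -2*π*y*ξ) = 2*π*ξ*(x-y) by ring]
    have h3 : f x = ∫ ξ : ℝ, ∫ y : ℝ, F ξ y := by
      rw [h2]; congr 1; funext ξ
      rw [Real.fourier_real_eq_integral_exp_smul, ← MeasureTheory.integral_const_mul,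
        ← MeasureTheory.integral_const_mul]
      congr 1; funext y
      rw [smul_eq_mul]
      exact hpt ξ y
    have h4 : f x = ∫ y : ℝ, ∫ ξ : ℝ, F ξ y := by
      rw [h3]
      exact integral_integral_swap hFunc
    rw [h4]
    congr 1; funext y
    have hFy : ∀ ξ : ℝ, F ξ y = (ψL ξ * Complex.exp (((2*π*ξ*(x-y) : ℝ):ℂ) * Complex.I)) * f y := by
      intro ξ; rw [hFdef]; ring
    calc (∫ ξ : ℝ, F ξ y)
        = ∫ ξ : ℝ, (ψL ξ * Complex.exp (((2*π*ξ*(x-y) : ℝ):ℂ) * Complex.I)) * f y := by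
          congr 1; funext ξ; exact hFy ξ
      _ = (∫ ξ : ℝ, ψL ξ * Complex.exp (((2*π*ξ*(x-y) : ℝ):ℂ) * Complex.I)) * f y :=
          MeasureTheory.integral_mul_const _ _
      _ = K (x - y) * f y := by rw [hK (x - y)]
    -- geometry of the tiles
  have hgeo : ∀ (𝔫 : ℤ) (x y : ℝ), x ∈ Set.Icc t (t + 1/L) →
      y ∈ Set.Ico (t + 𝔫/L) (t + (𝔫+1)/L) →
      (1 + |L * (x - y)|) ^ (-N) ≤ 2 ^ N * (1 + |(𝔫:ℝ)|) ^ (-N) := by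
    intro 𝔫 x y hx hy
    have e1 : L * x ≤ L * t + 1 := by
      have := mul_le_mul_of_nonneg_left hx.2 hL.le
      rwa [mul_add, mul_one_div, div_self hL.ne'] at this
    have e2 : L * t ≤ L * x := mul_le_mul_of_nonneg_left hx.1 hL.le
    have e3 : L * t + 𝔫 ≤ L * y := by
      have := mul_le_mul_of_nonneg_left hy.1 hL.le
      rwa [mul_add, mul_div_cancel₀ _ hL.ne'] at this
    have e4 : L * y ≤ L * t + ((𝔫:ℝ) + 1) := by
      have := mul_le_mul_of_nonneg_left hy.2.le hL.le
      rwa [mul_add, mul_div_cancel₀ _ hL.ne'] at this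
    have h1 : |L * (x - y) + 𝔫| ≤ 1 := by
      rw [abs_le]
      constructor <;> [nlinarith; nlinarith]
    have h𝔫 : |(𝔫:ℝ)| ≤ 1 + |L * (x - y)| := by
      rw [abs_le] at h1 ⊢
      constructor
      · linarith [le_abs_self (L * (x - y)), neg_abs_le (L * (x - y))]
      · linarith [le_abs_self (L * (x - y)), neg_abs_le (L * (x - y))]
    have ha : (0:ℝ) < 1 + |(𝔫:ℝ)| := by positivity
    have hbp : (0:ℝ) < 1 + |L * (x - y)| := by positivity
    have h2 : (1 + |(𝔫:ℝ)|)/2 ≤ 1 + |L * (x - y)| := by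
      have := abs_nonneg (L * (x - y)); linarith
    have h3 : ((1 + |(𝔫:ℝ)|)/2) ^ N ≤ (1 + |L * (x - y)|) ^ N :=
      Real.rpow_le_rpow (by positivity) h2 hN.le
    rw [Real.rpow_neg hbp.le, Real.rpow_neg ha.le]
    have hpow : (0:ℝ) < ((1 + |(𝔫:ℝ)|)/2) ^ N := Real.rpow_pos_of_pos (by positivity) N
    calc ((1 + |L * (x - y)|) ^ N)⁻¹ ≤ (((1 + |(𝔫:ℝ)|)/2) ^ N)⁻¹ :=
          inv_anti₀ hpow h3
      _ = 2 ^ N * ((1 + |(𝔫:ℝ)|) ^ N)⁻¹ := by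
          rw [Real.div_rpow ha.le (by norm_num : (0:ℝ) ≤ 2), inv_div, div_eq_mul_inv]
  -- the pointwise bound
  have hB : ∀ x ∈ Set.Icc c d, ‖f x‖ ≤ (CΦ * 2 ^ N) * ∑' 𝔫 : ℤ,
      (1 + |(𝔫:ℝ)|) ^ (-N) * (L * ∫ y in Set.Icc (t + 𝔫/L) (t + (𝔫+1)/L), ‖f y‖) := by
    intro x hx
    have hxI : x ∈ Set.Icc t (t + 1/L) := hsub hx
    have hKcont : Continuous K := by
      rw [hKdef]
      apply Continuous.fun_const_smul
      apply Continuous.mul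
      · apply Complex.continuous_exp.comp; fun_prop
      · exact (SchwartzMap.continuous mcPhi).comp (by fun_prop)
    have hgcont : Continuous fun y => K (x - y) * f y :=
      ((hKcont.comp (by fun_prop)).mul hfc)
    have hrpow1 : ∀ r : ℝ, (1 + |r|) ^ (-N) ≤ 1 := fun r =>
      Real.rpow_le_one_of_one_le_of_nonpos (le_add_of_nonneg_right (abs_nonneg _)) (by linarith)
    have hgint : Integrable fun y => K (x - y) * f y := by
      apply Integrable.mono' (hfi.norm.const_mul (L * CΦ)) hgcont.aestronglyMeasurable
      filter_upwards with y
      rw [norm_mul]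
      have h3 : ‖K (x - y)‖ ≤ L * CΦ := by
        calc ‖K (x - y)‖ ≤ L * (CΦ * (1 + |L * (x - y)|) ^ (-N)) := hKbound _
          _ ≤ L * (CΦ * 1) := by
              apply mul_le_mul_of_nonneg_left _ hL.le
              exact mul_le_mul_of_nonneg_left (hrpow1 _) hCΦpos.le
          _ = L * CΦ := by ring
      exact mul_le_mul_of_nonneg_right h3 (norm_nonneg _)
    have hnorm_int : Integrable (fun y => ‖K (x - y) * f y‖) := hgint.norm
    have hSum : HasSum (fun 𝔫 : ℤ => ∫ y in Set.Ico (t + 𝔫/L) (t + (𝔫+1)/L), ‖K (x - y) * f y‖)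
        (∫ y : ℝ, ‖K (x - y) * f y‖) := by
      have := hasSum_integral_iUnion (μ := volume)
        (s := fun 𝔫 : ℤ => Set.Ico (t + 𝔫/L) (t + (𝔫+1)/L))
        (f := fun y => ‖K (x - y) * f y‖) (fun _ => measurableSet_Ico) (tile_disjoint t L hL)
        (by rw [tile_iUnion t L hL]; exact hnorm_int.integrableOn)
      rwa [tile_iUnion t L hL, setIntegral_univ] at this
    have hS0 : HasSum (fun 𝔫 : ℤ => ∫ y in Set.Ico (t + 𝔫/L) (t + (𝔫+1)/L), ‖f y‖)
        (∫ y : ℝ, ‖f y‖) := by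
      have := hasSum_integral_iUnion (μ := volume)
        (s := fun 𝔫 : ℤ => Set.Ico (t + 𝔫/L) (t + (𝔫+1)/L))
        (f := fun y => ‖f y‖) (fun _ => measurableSet_Ico) (tile_disjoint t L hL)
        (by rw [tile_iUnion t L hL]; exact hfi.norm.integrableOn)
      rwa [tile_iUnion t L hL, setIntegral_univ] at this
    have hIccIco : ∀ 𝔫 : ℤ, (∫ y in Set.Icc (t + 𝔫/L) (t + (𝔫+1)/L), ‖f y‖)
        = ∫ y in Set.Ico (t + 𝔫/L) (t + (𝔫+1)/L), ‖f y‖ := fun 𝔫 =>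
      integral_Icc_eq_integral_Ico
    have hterm : ∀ 𝔫 : ℤ, (∫ y in Set.Ico (t + 𝔫/L) (t + (𝔫+1)/L), ‖K (x - y) * f y‖)
        ≤ (CΦ * 2 ^ N) * ((1 + |(𝔫:ℝ)|) ^ (-N) *
            (L * ∫ y in Set.Icc (t + 𝔫/L) (t + (𝔫+1)/L), ‖f y‖)) := by
      intro 𝔫
      rw [hIccIco 𝔫]
      have hmono : ∀ y ∈ Set.Ico (t + 𝔫/L) (t + (𝔫+1)/L), ‖K (x - y) * f y‖
          ≤ ((CΦ * 2 ^ N) * ((1 + |(𝔫:ℝ)|) ^ (-N) * L)) * ‖f y‖ := by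
        intro y hy
        rw [norm_mul]
        have h3 : ‖K (x - y)‖ ≤ (CΦ * 2 ^ N) * ((1 + |(𝔫:ℝ)|) ^ (-N) * L) := by
          calc ‖K (x - y)‖ ≤ L * (CΦ * (1 + |L * (x - y)|) ^ (-N)) := hKbound _
            _ ≤ L * (CΦ * (2 ^ N * (1 + |(𝔫:ℝ)|) ^ (-N))) := by
                apply mul_le_mul_of_nonneg_left _ hL.le
                exact mul_le_mul_of_nonneg_left (hgeo 𝔫 x y hxI hy) hCΦpos.le
            _ = (CΦ * 2 ^ N) * ((1 + |(𝔫:ℝ)|) ^ (-N) * L) := by ring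
        exact mul_le_mul_of_nonneg_right h3 (norm_nonneg _)
      calc (∫ y in Set.Ico (t + 𝔫/L) (t + (𝔫+1)/L), ‖K (x - y) * f y‖)
          ≤ ∫ y in Set.Ico (t + 𝔫/L) (t + (𝔫+1)/L),
              ((CΦ * 2 ^ N) * ((1 + |(𝔫:ℝ)|) ^ (-N) * L)) * ‖f y‖ :=
            setIntegral_mono_on hnorm_int.integrableOn
              ((hfi.norm.const_mul _).integrableOn) measurableSet_Ico hmono
        _ = (CΦ * 2 ^ N) * ((1 + |(𝔫:ℝ)|) ^ (-N) *
              (L * ∫ y in Set.Ico (t + 𝔫/L) (t + (𝔫+1)/L), ‖f y‖)) := by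
            rw [MeasureTheory.integral_const_mul]; ring
    have hrhs_sum : Summable fun 𝔫 : ℤ => (CΦ * 2 ^ N) * ((1 + |(𝔫:ℝ)|) ^ (-N) *
        (L * ∫ y in Set.Icc (t + 𝔫/L) (t + (𝔫+1)/L), ‖f y‖)) := by
      apply Summable.mul_left
      apply Summable.of_nonneg_of_le (fun 𝔫 => ?_) (fun 𝔫 => ?_)
        (hS0.summable.mul_left L)
      · have h0 : 0 ≤ ∫ y in Set.Icc (t + 𝔫/L) (t + (𝔫+1)/L), ‖f y‖ :=
          setIntegral_nonneg measurableSet_Icc (fun y _ => norm_nonneg _)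
        positivity
      · rw [hIccIco 𝔫]
        have h2 : 0 ≤ L * ∫ y in Set.Ico (t + 𝔫/L) (t + (𝔫+1)/L), ‖f y‖ :=
          mul_nonneg hL.le (setIntegral_nonneg measurableSet_Ico (fun y _ => norm_nonneg _))
        exact mul_le_of_le_one_left h2 (hrpow1 _)
    calc ‖f x‖ = ‖∫ y : ℝ, K (x - y) * f y‖ := by rw [← hrep x]
      _ ≤ ∫ y : ℝ, ‖K (x - y) * f y‖ := norm_integral_le_integral_norm _
      _ = ∑' 𝔫 : ℤ, ∫ y in Set.Ico (t + 𝔫/L) (t + (𝔫+1)/L), ‖K (x - y) * f y‖ :=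
          hSum.tsum_eq.symm
      _ ≤ ∑' 𝔫 : ℤ, (CΦ * 2 ^ N) * ((1 + |(𝔫:ℝ)|) ^ (-N) *
            (L * ∫ y in Set.Icc (t + 𝔫/L) (t + (𝔫+1)/L), ‖f y‖)) :=
          Summable.tsum_le_tsum hterm hSum.summable hrhs_sum
      _ = (CΦ * 2 ^ N) * ∑' 𝔫 : ℤ, (1 + |(𝔫:ℝ)|) ^ (-N) *
            (L * ∫ y in Set.Icc (t + 𝔫/L) (t + (𝔫+1)/L), ‖f y‖) := tsum_mul_left
  -- final L² averaging step
  set B := (CΦ * 2 ^ N) * ∑' 𝔫 : ℤ, (1 + |(𝔫:ℝ)|) ^ (-N) *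
      (L * ∫ y in Set.Icc (t + 𝔫/L) (t + (𝔫+1)/L), ‖f y‖) with hBdef
  have hBnn : 0 ≤ B := le_trans (norm_nonneg (f c)) (hB c ⟨le_refl c, hcd.le⟩)
  have hint2 : IntegrableOn (fun x => ‖f x‖ ^ 2) (Set.Icc c d) := (hfc.norm.pow 2).integrableOn_Icc
  have hvol : (volume (Set.Icc c d)).toReal = d - c := by
    rw [Real.volume_Icc, ENNReal.toReal_ofReal (by linarith)]
  have hIb : (∫ x in Set.Icc c d, ‖f x‖ ^ 2) ≤ (d - c) * B ^ 2 := by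
    calc (∫ x in Set.Icc c d, ‖f x‖ ^ 2) ≤ ∫ _x in Set.Icc c d, B ^ 2 :=
        setIntegral_mono_on hint2
          (integrableOn_const (by rw [Real.volume_Icc]; exact ENNReal.ofReal_ne_top))
          measurableSet_Icc
          (fun x hx => by have h := hB x hx; nlinarith [norm_nonneg (f x)])
      _ = (d - c) * B ^ 2 := by rw [setIntegral_const, smul_eq_mul, measureReal_def, hvol]
  have h4 : (∫ x in Set.Icc c d, ‖f x‖ ^ 2) / (d - c) ≤ B ^ 2 := by
    rw [div_le_iff₀ (by linarith : (0:ℝ) < d - c)]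
    nlinarith [hIb]
  have h5 : Real.sqrt ((∫ x in Set.Icc c d, ‖f x‖ ^ 2) / (d - c)) ≤ Real.sqrt (B ^ 2) :=
    Real.sqrt_le_sqrt h4
  rwa [Real.sqrt_sq hBnn] at h5
end
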